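/- Let G be a finite abelian group and x ∈ G. If s₁,...,s_{n-1} are independent and uniformly distributed on G and s_n = x - (s₁ + ⋯ + s_{n-1}), then for any proper subset T ⊊ {1,...,n}, the joint distribution of (s_i)_{i∈T} is uniform on G^{|T|} and is independent of x. -/

import Mathlib

open scoped ENNReal Classical

private lemma map_unif_aux {A B : Type*} [Fintype A] [Nonempty A] [Fintype B] [Nonempty B]
    (f : A → B) (c : ℕ)
    (hc : ∀ b : B, (Finset.univ.filter (fun a => f a = b)).card = c) :
    PMF.map f (PMF.uniformOfFintype A) = PMF.uniformOfFintype B := by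
  have hcardA : Fintype.card A = Fintype.card B * c := by
    rw [← Finset.card_univ, Finset.card_eq_sum_card_fiberwise
      (f := f) (t := Finset.univ) (fun a _ => Finset.mem_univ _)]
    rw [Finset.sum_congr rfl (fun b _ => hc b)]
    simp [Finset.card_univ, mul_comm]
  have hc0 : c ≠ 0 := by
    intro h
    have := Fintype.card_pos (α := A)
    rw [hcardA, h, mul_zero] at this
    omega
  ext b
  rw [PMF.map_apply, PMF.uniformOfFintype_apply, tsum_fintype]
  simp only [PMF.uniformOfFintype_apply]
  have h1 : (∑ x : A, if b = f x then ((Fintype.card A : ℝ≥0∞))⁻¹ else 0)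
      = ∑ x ∈ Finset.univ.filter (fun a => f a = b), ((Fintype.card A : ℝ≥0∞))⁻¹ := by
    rw [Finset.sum_filter]
    exact Finset.sum_congr rfl (fun a _ => by simp [eq_comm])
  rw [h1, Finset.sum_const, hc b, hcardA]
  push_cast
  rw [ENNReal.mul_inv (by simp [Fintype.card_ne_zero]) (by simp)]
  rw [nsmul_eq_mul, mul_comm ((Fintype.card B : ℝ≥0∞))⁻¹, ← mul_assoc,
    ENNReal.mul_inv_cancel (by exact_mod_cast hc0) (by simp), one_mul]

section
variable {G : Type*} [AddCommGroup G] [Fintype G] {n : ℕ}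

set_option linter.unusedSectionVars false in
private lemma translate_exists (T : Finset (Fin (n + 1))) (hT : T ≠ Finset.univ) (x : G)
    (t : T → G) :
    ∃ d : Fin n → G, ∀ (u : Fin n → G) (i : T),
      (Fin.snoc (u + d) (x - ∑ j, (u + d) j) : Fin (n+1) → G) (i : Fin (n+1))
        = (Fin.snoc u (x - ∑ j, u j) : Fin (n+1) → G) (i : Fin (n+1)) + t i := by
  classical
  set d₀ : Fin n → G := fun j => if h : j.castSucc ∈ T then t ⟨j.castSucc, h⟩ else 0 with hd₀
  by_cases hlast : Fin.last n ∈ T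
  · -- pick m with castSucc m ∉ T
    obtain ⟨k, hk⟩ : ∃ k, k ∉ T := by
      by_contra h
      push_neg at h
      exact hT (Finset.eq_univ_iff_forall.2 h)
    have hkne : k ≠ Fin.last n := fun h => hk (h ▸ hlast)
    obtain ⟨m, hm⟩ := Fin.exists_castSucc_eq.mpr hkne
    have hmT : m.castSucc ∉ T := hm ▸ hk
    refine ⟨Function.update d₀ m (d₀ m - ∑ j, d₀ j - t ⟨Fin.last n, hlast⟩), fun u i => ?_⟩
    set d := Function.update d₀ m (d₀ m - ∑ j, d₀ j - t ⟨Fin.last n, hlast⟩) with hd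
    have hsum : ∑ j, d j = - t ⟨Fin.last n, hlast⟩ := by
      rw [hd, Finset.sum_update_of_mem (Finset.mem_univ m)]
      have : ∑ j ∈ Finset.univ \ {m}, d₀ j = ∑ j, d₀ j - d₀ m := by
        rw [Finset.sum_sdiff_eq_sub (by simp), Finset.sum_singleton]
      rw [this]
      abel
    by_cases hi : (i : Fin (n+1)) = Fin.last n
    · have hieq : i = (⟨Fin.last n, hlast⟩ : T) := Subtype.ext hi
      rw [hieq]
      simp only [Fin.snoc_last]
      have : ∑ j, (u + d) j = ∑ j, u j + ∑ j, d j := Finset.sum_add_distrib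
      rw [this, hsum]
      abel
    · obtain ⟨p, hp⟩ := Fin.exists_castSucc_eq.mpr hi
      rw [← hp, Fin.snoc_castSucc, Fin.snoc_castSucc]
      have hpT : p.castSucc ∈ T := by rw [hp]; exact i.2
      have hpm : p ≠ m := by
        intro h
        subst h; exact hmT hpT
      have : d p = t i := by
        rw [hd, Function.update_of_ne hpm, hd₀]
        simp only [hpT, dif_pos]
        congr 1
        exact Subtype.ext hp
      simp [this]
  · refine ⟨d₀, fun u i => ?_⟩
    have hi : (i : Fin (n+1)) ≠ Fin.last n := fun h => hlast (h ▸ i.2)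
    obtain ⟨p, hp⟩ := Fin.exists_castSucc_eq.mpr hi
    rw [← hp, Fin.snoc_castSucc, Fin.snoc_castSucc]
    have hpT : p.castSucc ∈ T := by rw [hp]; exact i.2
    have : d₀ p = t i := by
      rw [hd₀]
      simp only [hpT, dif_pos]
      congr 1
      exact Subtype.ext hp
    simp [this]

end

/-- n-out-of-n additive secret sharing: if s₁,...,s_n are uniform i.i.d. and the
last share is x - (s₁ + ⋯ + s_n), then the restriction of the shares to any
proper subset T of the indices is uniformly distributed on G^T, independently
of the secret x. -/
theorem stmt_13 (G : Type*) [AddCommGroup G] [Fintype G] (n : ℕ)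
    (T : Finset (Fin (n + 1))) (hT : T ≠ Finset.univ) (x : G) :
    (PMF.uniformOfFintype (Fin n → G)).map
        (fun (u : Fin n → G) => (fun i : T => (Fin.snoc u (x - ∑ j, u j) : Fin (n+1) → G) (i : Fin (n + 1)) : T → G))
      = PMF.uniformOfFintype (T → G) := by
  classical
  haveI : Nonempty (T → G) := ⟨fun _ => (0 : G)⟩
  set F : (Fin n → G) → (T → G) := fun u =>
    (fun i : T => (Fin.snoc u (x - ∑ j, u j) : Fin (n+1) → G) (i : Fin (n + 1))) with hF
  have key : ∀ b₁ b₂ : T → G,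
      (Finset.univ.filter (fun u => F u = b₁)).card
        = (Finset.univ.filter (fun u => F u = b₂)).card := by
    intro b₁ b₂
    obtain ⟨d, hd⟩ := translate_exists T hT x (b₂ - b₁)
    apply Finset.card_bij (fun u _ => u + d)
    · intro u hu
      simp only [Finset.mem_filter, Finset.mem_univ, true_and] at hu ⊢
      funext i
      have := hd u i
      simp only [hF] at this ⊢
      have hu' : (Fin.snoc u (x - ∑ j, u j) : Fin (n+1) → G) (i : Fin (n+1)) = b₁ i :=
        congrFun hu i
      rw [this, hu']
      simp
    · intro u₁ h₁ u₂ h₂ h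
      exact add_right_cancel h
    · intro v hv
      simp only [Finset.mem_filter, Finset.mem_univ, true_and] at hv
      refine ⟨v - d, ?_, by abel⟩
      simp only [Finset.mem_filter, Finset.mem_univ, true_and]
      funext i
      have := hd (v - d) i
      simp only [hF] at this ⊢
      rw [sub_add_cancel] at this
      have hv' : F v i = b₂ i := by rw [hv]
      simp only [hF] at hv'
      rw [hv'] at this
      have h2 : (b₂ - b₁) i = b₂ i - b₁ i := rfl
      rw [h2] at this
      rw [eq_sub_of_add_eq this.symm]
      abel
  apply map_unif_aux _ ((Finset.univ.filter (fun u => F u = Classical.arbitrary (T → G))).card)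
  intro b
  convert key b (Classical.arbitrary _) using 2
  exact Finset.filter_congr_decidable _ _ _
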